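/- Let M be a real n×n matrix with nonpositive off-diagonal entries, and suppose there exist strictly positive vectors v, w with M v ≫ 0 and Mᵀ w ≫ 0. Let X = diag(v₁/w₁, …, vₙ/wₙ). Then the symmetric matrix M X + X Mᵀ is positive definite. -/

import Mathlib

open Matrix Finset

theorem diag_scaling_posDef {n : ℕ} (M : Matrix (Fin n) (Fin n) ℝ)
    (hoff : ∀ i j, i ≠ j → M i j ≤ 0)
    (v w : Fin n → ℝ) (hv : ∀ i, 0 < v i) (hw : ∀ i, 0 < w i)
    (hMv : ∀ i, 0 < M.mulVec v i) (hMw : ∀ i, 0 < (Mᵀ).mulVec w i) :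
    (M * Matrix.diagonal (fun i => v i / w i)
      + Matrix.diagonal (fun i => v i / w i) * Mᵀ).PosDef := by
  set d : Fin n → ℝ := fun i => v i / w i with hd
  rw [posDef_iff_dotProduct_mulVec]
  constructor
  · unfold Matrix.IsHermitian
    ext i j
    simp [conjTranspose_apply, Matrix.add_apply, mul_diagonal, diagonal_mul, transpose_apply,
      mul_comm, add_comm]
  · intro x hx
    set s : Fin n → ℝ := fun i => x i / w i with hs
    have hxs : ∀ i, x i = s i * w i := fun i =>
      (div_mul_cancel₀ _ (hw i).ne').symm
    have hb : ∀ i j, x i * (M i j * d j) * x j = s i * s j * (w i * M i j * v j) := by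
      intro i j
      rw [hxs i, hxs j]
      have hwj := (hw j).ne'
      simp only [hd]
      field_simp
    have h1 : ∀ i, x i * ((M * Matrix.diagonal d) *ᵥ x) i
        = ∑ j, s i * s j * (w i * M i j * v j) := by
      intro i
      simp only [mulVec, dotProduct, mul_diagonal, Finset.mul_sum]
      exact Finset.sum_congr rfl fun j _ => by rw [← hb i j]; ring
    have h2 : ∀ i, x i * ((Matrix.diagonal d * Mᵀ) *ᵥ x) i
        = ∑ j, s j * s i * (w j * M j i * v i) := by
      intro i
      simp only [mulVec, dotProduct, diagonal_mul, transpose_apply, Finset.mul_sum]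
      refine Finset.sum_congr rfl fun j _ => ?_
      rw [← hb j i]; ring
    have hQ : dotProduct (star x) ((M * Matrix.diagonal d
        + Matrix.diagonal d * Mᵀ) *ᵥ x)
        = 2 * ∑ i, ∑ j, s i * s j * (w i * M i j * v j) := by
      simp only [star_trivial, add_mulVec, dotProduct]
      simp only [Pi.add_apply, mul_add, Finset.sum_add_distrib]
      rw [Finset.sum_congr rfl fun i _ => h1 i, Finset.sum_congr rfl fun i _ => h2 i]
      rw [Finset.sum_comm (f := fun i j => s j * s i * (w j * M j i * v i))]
      ring
    rw [hQ]
    have hbound : ∑ i, ∑ j, (s i ^ 2 + s j ^ 2) / 2 * (w i * M i j * v j)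
        ≤ ∑ i, ∑ j, s i * s j * (w i * M i j * v j) := by
      refine Finset.sum_le_sum fun i _ => Finset.sum_le_sum fun j _ => ?_
      rcases eq_or_ne i j with rfl | hij
      · apply le_of_eq; ring
      · have hM0 : w i * M i j * v j ≤ 0 :=
          mul_nonpos_of_nonpos_of_nonneg
            (mul_nonpos_of_nonneg_of_nonpos (hw i).le (hoff i j hij)) (hv j).le
        have : s i * s j ≤ (s i ^ 2 + s j ^ 2) / 2 := by nlinarith [sq_nonneg (s i - s j)]
        exact mul_le_mul_of_nonpos_right this hM0
    have hlow : ∑ i, ∑ j, (s i ^ 2 + s j ^ 2) / 2 * (w i * M i j * v j)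
        = (1/2) * ∑ i, s i ^ 2 * (w i * M.mulVec v i + v i * (Mᵀ).mulVec w i) := by
      have key : ∀ i j, (s i ^ 2 + s j ^ 2) / 2 * (w i * M i j * v j)
          = (1/2) * (s i ^ 2 * (w i * (M i j * v j))) + (1/2) * (s j ^ 2 * (v j * (M i j * w i))) := by
        intro i j; ring
      simp only [key, Finset.sum_add_distrib]
      rw [Finset.sum_comm (f := fun i j => (1/2) * (s j ^ 2 * (v j * (M i j * w i))))]
      simp only [mulVec, dotProduct, transpose_apply, Finset.mul_sum, mul_add]
      rw [← Finset.sum_add_distrib]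
    have hpos : 0 < ∑ i, s i ^ 2 * (w i * M.mulVec v i + v i * (Mᵀ).mulVec w i) := by
      obtain ⟨i, hi⟩ := Function.ne_iff.mp hx
      have hsi : s i ≠ 0 := div_ne_zero hi (hw i).ne'
      have hc : ∀ k, 0 < w k * M.mulVec v k + v k * (Mᵀ).mulVec w k := fun k =>
        add_pos (mul_pos (hw k) (hMv k)) (mul_pos (hv k) (hMw k))
      refine Finset.sum_pos' (fun k _ => mul_nonneg (sq_nonneg _) (hc k).le)
        ⟨i, Finset.mem_univ i, mul_pos (by positivity) (hc i)⟩
    calc (0:ℝ) < 2 * ((1/2) * ∑ i, s i ^ 2 * (w i * M.mulVec v i + v i * (Mᵀ).mulVec w i)) := by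
          linarith
      _ = 2 * ∑ i, ∑ j, (s i ^ 2 + s j ^ 2) / 2 * (w i * M i j * v j) := by rw [hlow]
      _ ≤ 2 * ∑ i, ∑ j, s i * s j * (w i * M i j * v j) := by linarith
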